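/- Let G be a connected graph on n vertices and let k be an integer with 3 ≤ k ≤ n. Then μ_k(G) ≤ (k − 1) · μ(G). -/

import Mathlib

/-- The Steiner distance of a set `S` of vertices of `G`: the minimum number of edges
of a connected subgraph of `G` containing all vertices of `S`. -/
noncomputable def steinerDist {V : Type*} (G : SimpleGraph V) (S : Set V) : ℕ :=
  sInf {n | ∃ H : G.Subgraph, H.Connected ∧ S ⊆ H.verts ∧ H.edgeSet.ncard = n}
/-- The Steiner `k`-Wiener index of `G`: the sum of the Steiner distances of all
`k`-element subsets of vertices of `G`. -/
noncomputable def steinerWiener {V : Type*} (G : SimpleGraph V) [Fintype V] (k : ℕ) : ℕ :=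
  ∑ S ∈ (Finset.univ : Finset V).powersetCard k, steinerDist G (S : Set V)
/-- The average `k`-Steiner distance of `G`: the average of the Steiner distances of
all `k`-element subsets of vertices of `G`. -/
noncomputable def avgSteinerDist {V : Type*} (G : SimpleGraph V) [Fintype V] (k : ℕ) : ℝ :=
  (steinerWiener G k : ℝ) / ((Fintype.card V).choose k)

section Aux

variable {V : Type*} (G : SimpleGraph V)

lemma steinerDist_le {S : Set V} {H : G.Subgraph} (hc : H.Connected) (hs : S ⊆ H.verts) :
    steinerDist G S ≤ H.edgeSet.ncard :=
  Nat.sInf_le ⟨H, hc, hs, rfl⟩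

lemma steinerDist_exists (hG : G.Connected) (S : Set V) :
    ∃ H : G.Subgraph, H.Connected ∧ S ⊆ H.verts ∧ H.edgeSet.ncard = steinerDist G S := by
  have hne : {n | ∃ H : G.Subgraph, H.Connected ∧ S ⊆ H.verts ∧ H.edgeSet.ncard = n}.Nonempty := by
    refine ⟨(⊤ : G.Subgraph).edgeSet.ncard, ⊤, ?_,
      by rw [SimpleGraph.Subgraph.verts_top]; exact Set.subset_univ _, rfl⟩
    rw [SimpleGraph.Subgraph.connected_iff']
    exact (SimpleGraph.Subgraph.topIso.connected_iff).mpr hG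
  exact Nat.sInf_mem hne

variable [Fintype V] [DecidableEq V]

lemma steinerDist_star (hG : G.Connected) (v : V) (T : Finset V) :
    steinerDist G (insert v (T : Set V)) ≤ ∑ u ∈ T, steinerDist G {v, u} := by
  induction T using Finset.induction with
  | empty =>
      simp only [Finset.coe_empty, Finset.sum_empty, Nat.le_zero]
      have h := steinerDist_le G (SimpleGraph.Subgraph.singletonSubgraph_connected (v := v))
        (S := insert v (∅ : Set V))
        (by rw [SimpleGraph.singletonSubgraph_verts]; simp)
      simpa [SimpleGraph.edgeSet_singletonSubgraph] using h
  | @insert a T ha ih =>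
      obtain ⟨H1, h1c, h1s, h1n⟩ := steinerDist_exists G hG {v, a}
      obtain ⟨H2, h2c, h2s, h2n⟩ := steinerDist_exists G hG (insert v (T : Set V))
      have hmem : v ∈ (H1 ⊓ H2).verts := by
        constructor
        · exact h1s (by simp)
        · exact h2s (Set.mem_insert _ _)
      have hc : (H1 ⊔ H2).Connected := SimpleGraph.Subgraph.connected_sup h1c.preconnected h2c.preconnected ⟨v, hmem⟩
      have hsub : insert v ((insert a T : Finset V) : Set V) ⊆ (H1 ⊔ H2).verts := by
        rw [SimpleGraph.Subgraph.verts_sup]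
        intro x hx
        simp only [Finset.coe_insert, Set.mem_insert_iff, Finset.mem_coe] at hx
        rcases hx with rfl | rfl | hx
        · exact Or.inl (h1s (by simp))
        · exact Or.inl (h1s (by simp))
        · exact Or.inr (h2s (Set.mem_insert_of_mem _ hx))
      calc steinerDist G (insert v ((insert a T : Finset V) : Set V))
          ≤ (H1 ⊔ H2).edgeSet.ncard := steinerDist_le G hc hsub
        _ ≤ H1.edgeSet.ncard + H2.edgeSet.ncard := by
            rw [SimpleGraph.Subgraph.edgeSet_sup]; exact Set.ncard_union_le _ _
        _ = steinerDist G {v, a} + steinerDist G (insert v (T : Set V)) := by rw [h1n, h2n]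
        _ ≤ steinerDist G {v, a} + ∑ u ∈ T, steinerDist G {v, u} :=
            Nat.add_le_add_left ih _
        _ = ∑ u ∈ insert a T, steinerDist G {v, u} := by rw [Finset.sum_insert ha]

lemma steinerDist_card_mul_le (hG : G.Connected) (S : Finset V) :
    S.card * steinerDist G (S : Set V) ≤
      ∑ v ∈ S, ∑ u ∈ S.erase v, steinerDist G {v, u} := by
  have h : S.card * steinerDist G (S : Set V) = ∑ _v ∈ S, steinerDist G (S : Set V) := by
    rw [Finset.sum_const, smul_eq_mul]
  rw [h]
  refine Finset.sum_le_sum fun v hv => ?_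
  have hS : (S : Set V) = insert v ((S.erase v : Finset V) : Set V) := by
    rw [← Finset.coe_insert, Finset.insert_erase hv]
  rw [hS]
  exact steinerDist_star G hG v _

end Aux

section Counting

variable {V : Type*} [Fintype V] [DecidableEq V]

/-- counting: each (ordered) pair lies in `(n-2).choose (k-2)` of the `k`-sets. -/
lemma card_filter_pair_mem (v u : V) (hvu : v ≠ u) (k : ℕ) (hk : 2 ≤ k) :
    (((Finset.univ : Finset V).powersetCard k).filter (fun S => v ∈ S ∧ u ∈ S)).card
      = (Fintype.card V - 2).choose (k - 2) := by
  have hcard2 : ({v, u} : Finset V).card = 2 := Finset.card_pair hvu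
  have key : (((Finset.univ : Finset V).powersetCard k).filter (fun S => v ∈ S ∧ u ∈ S)).card
      = ((Finset.univ \ {v, u}).powersetCard (k - 2)).card := by
    refine Finset.card_nbij' (fun S => S \ {v, u}) (fun T => T ∪ {v, u}) ?_ ?_ ?_ ?_
    · intro S hS
      simp only [Finset.coe_filter, Finset.mem_coe, Finset.mem_filter, Finset.mem_powersetCard] at hS
      obtain ⟨⟨-, hSk⟩, hv, hu⟩ := hS
      have hsub : ({v, u} : Finset V) ⊆ S := by
        intro x hx; simp only [Finset.mem_insert, Finset.mem_singleton] at hx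
        rcases hx with rfl | rfl <;> assumption
      rw [Finset.mem_coe, Finset.mem_powersetCard]
      constructor
      · intro x hx
        simp only [Finset.mem_sdiff] at hx ⊢
        exact ⟨Finset.mem_univ _, hx.2⟩
      · rw [Finset.card_sdiff_of_subset hsub, hSk, hcard2]
    · intro T hT
      rw [Finset.mem_coe, Finset.mem_powersetCard] at hT
      obtain ⟨hTsub, hTcard⟩ := hT
      have hdisj : Disjoint T ({v, u} : Finset V) := by
        refine Finset.disjoint_left.mpr fun x hx hx' => ?_
        have hx2 := hTsub hx
        rw [Finset.mem_sdiff] at hx2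
        exact hx2.2 hx'
      simp only [Finset.coe_filter, Finset.mem_coe, Finset.mem_filter, Finset.mem_powersetCard]
      refine ⟨⟨Finset.subset_univ _, ?_⟩, ?_, ?_⟩
      · rw [Finset.card_union_of_disjoint hdisj, hTcard, hcard2]
        omega
      · exact Finset.mem_union_right _ (by simp)
      · exact Finset.mem_union_right _ (by simp)
    · intro S hS
      simp only [Finset.coe_filter, Finset.mem_coe, Finset.mem_filter, Finset.mem_powersetCard] at hS
      obtain ⟨-, hv, hu⟩ := hS
      have hsub : ({v, u} : Finset V) ⊆ S := by
        intro x hx; simp only [Finset.mem_insert, Finset.mem_singleton] at hx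
        rcases hx with rfl | rfl <;> assumption
      exact Finset.sdiff_union_of_subset hsub
    · intro T hT
      rw [Finset.mem_coe, Finset.mem_powersetCard] at hT
      have hdisj : Disjoint T ({v, u} : Finset V) := by
        refine Finset.disjoint_left.mpr fun x hx hx' => ?_
        have hx2 := hT.1 hx
        rw [Finset.mem_sdiff] at hx2
        exact hx2.2 hx'
      show (T ∪ {v, u}) \ {v, u} = T
      rw [Finset.union_sdiff_distrib, Finset.sdiff_self, Finset.union_empty,
        Finset.sdiff_eq_self_of_disjoint hdisj]
  rw [key, Finset.card_powersetCard, Finset.card_sdiff_of_subset (Finset.subset_univ _), hcard2,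
    Finset.card_univ]

lemma sum_sum_erase_eq (k : ℕ) (hk : 2 ≤ k) (f : V → V → ℕ) :
    ∑ S ∈ (Finset.univ : Finset V).powersetCard k, ∑ v ∈ S, ∑ u ∈ S.erase v, f v u
      = (Fintype.card V - 2).choose (k - 2) *
          ∑ v : V, ∑ u ∈ Finset.univ.erase v, f v u := by
  have step1 : ∀ S : Finset V,
      ∑ v ∈ S, ∑ u ∈ S.erase v, f v u
        = ∑ v : V, ∑ u ∈ Finset.univ.erase v, if v ∈ S ∧ u ∈ S then f v u else 0 := by
    intro S
    have h1 : ∑ v : V, ∑ u ∈ Finset.univ.erase v, (if v ∈ S ∧ u ∈ S then f v u else 0)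
        = ∑ v : V, if v ∈ S then (∑ u ∈ Finset.univ.erase v, if u ∈ S then f v u else 0)
            else 0 := by
      refine Finset.sum_congr rfl fun v _ => ?_
      by_cases hv : v ∈ S
      · simp [hv]
      · simp [hv]
    rw [h1, Finset.sum_ite_mem, Finset.univ_inter]
    refine Finset.sum_congr rfl fun v hv => ?_
    rw [Finset.sum_ite_mem]
    congr 1
    ext x
    simp only [Finset.mem_inter, Finset.mem_erase, Finset.mem_univ, true_and]
    tauto
  rw [Finset.sum_congr rfl fun S _ => step1 S, Finset.sum_comm]
  rw [Finset.mul_sum]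
  refine Finset.sum_congr rfl fun v _ => ?_
  rw [Finset.sum_comm, Finset.mul_sum]
  refine Finset.sum_congr rfl fun u hu => ?_
  have hvu : v ≠ u := by
    rw [Finset.mem_erase] at hu
    exact fun h => hu.1 h.symm
  rw [Finset.sum_ite, Finset.sum_const_zero, add_zero, Finset.sum_const, smul_eq_mul,
    card_filter_pair_mem v u hvu k hk]

lemma sum_pairs_eq_two_mul (f : V → V → ℕ) (hf : ∀ v u, f v u = f u v)
    (g : Finset V → ℕ) (hg : ∀ v u, v ≠ u → g {v, u} = f v u) :
    ∑ v : V, ∑ u ∈ Finset.univ.erase v, f v u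
      = 2 * ∑ P ∈ (Finset.univ : Finset V).powersetCard 2, g P := by
  have step1 : ∀ v : V, ∑ u ∈ Finset.univ.erase v, f v u
      = ∑ P ∈ ((Finset.univ : Finset V).powersetCard 2).filter (v ∈ ·), g P := by
    intro v
    refine Finset.sum_nbij (fun u => ({v, u} : Finset V)) ?_ ?_ ?_ ?_
    · intro u hu
      rw [Finset.mem_erase] at hu
      simp only [Finset.mem_filter, Finset.mem_powersetCard]
      exact ⟨⟨Finset.subset_univ _, Finset.card_pair (Ne.symm hu.1)⟩, by simp⟩
    · intro u hu u' hu' h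
      rw [Finset.mem_coe, Finset.mem_erase] at hu hu'
      have h' : ({v, u} : Finset V) = {v, u'} := h
      have hmem : u ∈ ({v, u'} : Finset V) := h' ▸ (by simp : u ∈ ({v, u} : Finset V))
      simp only [Finset.mem_insert, Finset.mem_singleton] at hmem
      rcases hmem with rfl | rfl
      · exact absurd rfl hu.1
      · rfl
    · intro P hP
      simp only [Finset.coe_filter, Set.mem_setOf_eq, Finset.mem_powersetCard] at hP
      obtain ⟨⟨-, hP2⟩, hvP⟩ := hP
      have h1 : (P.erase v).card = 1 := by
        rw [Finset.card_erase_of_mem hvP, hP2]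
      obtain ⟨u, hu⟩ := Finset.card_eq_one.mp h1
      have huv : u ≠ v := by
        have hmem : u ∈ P.erase v := hu ▸ Finset.mem_singleton_self u
        exact (Finset.mem_erase.mp hmem).1
      refine ⟨u, by simp [Finset.mem_erase, huv], ?_⟩
      show ({v, u} : Finset V) = P
      rw [show ({v, u} : Finset V) = insert v {u} from rfl, ← hu, Finset.insert_erase hvP]
    · intro u hu
      rw [Finset.mem_erase] at hu
      exact (hg v u (Ne.symm hu.1)).symm
  rw [Finset.sum_congr rfl fun v _ => step1 v]
  have step2 : ∀ v : V,
      ∑ P ∈ ((Finset.univ : Finset V).powersetCard 2).filter (v ∈ ·), g P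
        = ∑ P ∈ (Finset.univ : Finset V).powersetCard 2, if v ∈ P then g P else 0 := by
    intro v; rw [Finset.sum_filter]
  rw [Finset.sum_congr rfl fun v _ => step2 v, Finset.sum_comm, Finset.mul_sum]
  refine Finset.sum_congr rfl fun P hP => ?_
  rw [Finset.mem_powersetCard] at hP
  rw [Finset.sum_ite_mem, Finset.univ_inter, Finset.sum_const, smul_eq_mul, hP.2]

end Counting

/-- For a connected graph `G` on `n` vertices and `3 ≤ k ≤ n`,
`μ_k(G) ≤ (k − 1)·μ(G)`, where `μ(G) = μ_2(G)` is the average distance. -/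
theorem avgSteinerDist_le_mul_avgDist {V : Type*} (G : SimpleGraph V) [Fintype V]
    (hG : G.Connected) (k : ℕ) (hk3 : 3 ≤ k) (hk : k ≤ Fintype.card V) :
    avgSteinerDist G k ≤ ((k : ℝ) - 1) * avgSteinerDist G 2 := by
  classical
  set n := Fintype.card V with hn
  have hn3 : 3 ≤ n := le_trans hk3 hk
  have hmain : k * steinerWiener G k ≤
      (n - 2).choose (k - 2) * (2 * steinerWiener G 2) := by
    have h1 : k * steinerWiener G k ≤
        ∑ S ∈ (Finset.univ : Finset V).powersetCard k, ∑ v ∈ S, ∑ u ∈ S.erase v,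
          steinerDist G {v, u} := by
      rw [steinerWiener, Finset.mul_sum]
      refine Finset.sum_le_sum fun S hS => ?_
      have hcard : S.card = k := (Finset.mem_powersetCard.mp hS).2
      calc k * steinerDist G (S : Set V) = S.card * steinerDist G (S : Set V) := by rw [hcard]
        _ ≤ _ := steinerDist_card_mul_le G hG S
    have h2 := sum_sum_erase_eq (V := V) k (by omega) (fun v u => steinerDist G {v, u})
    have h3 := sum_pairs_eq_two_mul (V := V) (fun v u => steinerDist G {v, u})
        (fun v u => by show steinerDist G {v, u} = steinerDist G {u, v}; rw [Set.pair_comm]) (fun P => steinerDist G (P : Set V))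
        (fun v u _ => by simp)
    calc k * steinerWiener G k ≤ _ := h1
      _ = (n - 2).choose (k - 2) * ∑ v : V, ∑ u ∈ Finset.univ.erase v,
            steinerDist G {v, u} := h2
      _ = (n - 2).choose (k - 2) * (2 * steinerWiener G 2) := by
          rw [h3]; rfl
  have hCk : 0 < n.choose k := Nat.choose_pos hk
  have hC2 : 0 < n.choose 2 := Nat.choose_pos (by omega)
  have h2 : 2 * k.choose 2 = k * (k - 1) := by
    have he : Even (k * (k - 1)) := by
      have hx : k * (k - 1) = (k - 1) * ((k - 1) + 1) := by
        rw [Nat.sub_add_cancel (by omega)]; ring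
      rw [hx]; exact Nat.even_mul_succ_self _
    rw [Nat.choose_two_right, Nat.mul_div_cancel' he.two_dvd]
  have hid : 2 * ((n - 2).choose (k - 2)) * n.choose 2 = k * (k - 1) * n.choose k := by
    have h := Nat.choose_mul (n := n) (k := k) (s := 2) (by omega)
    have hx : 2 * ((n - 2).choose (k - 2)) * n.choose 2
        = 2 * (n.choose k * k.choose 2) := by rw [h]; ring
    rw [hx, show 2 * (n.choose k * k.choose 2) = (2 * k.choose 2) * n.choose k by ring, h2]
  have hnat : steinerWiener G k * n.choose 2 * k ≤
      (k - 1) * steinerWiener G 2 * n.choose k * k := by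
    calc steinerWiener G k * n.choose 2 * k
        = (k * steinerWiener G k) * n.choose 2 := by ring
      _ ≤ ((n - 2).choose (k - 2) * (2 * steinerWiener G 2)) * n.choose 2 :=
          Nat.mul_le_mul_right _ hmain
      _ = steinerWiener G 2 * (2 * ((n - 2).choose (k - 2)) * n.choose 2) := by ring
      _ = steinerWiener G 2 * (k * (k - 1) * n.choose k) := by rw [hid]
      _ = (k - 1) * steinerWiener G 2 * n.choose k * k := by ring
  have hnat2 : steinerWiener G k * n.choose 2 ≤ (k - 1) * steinerWiener G 2 * n.choose k :=
    Nat.le_of_mul_le_mul_right hnat (by omega)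
  unfold avgSteinerDist
  rw [show ((k : ℝ) - 1) * ((steinerWiener G 2 : ℝ) / (n.choose 2 : ℝ))
      = (((k : ℝ) - 1) * (steinerWiener G 2 : ℝ)) / (n.choose 2 : ℝ) from
      (mul_div_assoc _ _ _).symm]
  have hCkR : (0 : ℝ) < (n.choose k : ℝ) := by exact_mod_cast hCk
  have hC2R : (0 : ℝ) < (n.choose 2 : ℝ) := by exact_mod_cast hC2
  rw [div_le_div_iff₀ hCkR hC2R]
  have hcast : ((k - 1 : ℕ) : ℝ) = (k : ℝ) - 1 := by
    have h1k : (1 : ℕ) ≤ k := by omega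
    rw [Nat.cast_sub h1k, Nat.cast_one]
  rw [← hcast]
  exact_mod_cast hnat2
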